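/- Let {ξ_{ij}}_{1≤i≠j≤n} be i.i.d. Bernoulli(p_n) random variables with ξ_{ii} = 0, defined for all n on a common probability space, and suppose n p_n → ∞. Then almost surely, (1/n²) sup_{s,t∈{-1,1}ⁿ} ∑_{i,j=1}^n (ξ_{ij}/p_n - 1) s_i t_j → 0 as n → ∞. -/

import Mathlib

open Filter MeasureTheory

/-- The ℓ_∞→ℓ_1 norm of a matrix: sup over ±1 sign vectors s, t of ∑ᵢⱼ Aᵢⱼ sᵢ tⱼ. -/
noncomputable def linftyToL1Norm {n : ℕ} (A : Matrix (Fin n) (Fin n) ℝ) : ℝ :=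
  sSup {x : ℝ | ∃ s t : Fin n → ℝ, (∀ i, s i = 1 ∨ s i = -1) ∧
    (∀ j, t j = 1 ∨ t j = -1) ∧ x = ∑ i, ∑ j, A i j * s i * t j}

section Aux
open Real ProbabilityTheory

noncomputable def bsgn (b : Bool) : ℝ := if b then 1 else -1

lemma bsgn_cases (b : Bool) : bsgn b = 1 ∨ bsgn b = -1 := by
  cases b <;> simp [bsgn]

lemma bsgn_not (b : Bool) : bsgn (!b) = -bsgn b := by cases b <;> simp [bsgn]

noncomputable def signSum {n : ℕ} (A : Matrix (Fin n) (Fin n) ℝ)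
    (σ τ : Fin n → Bool) : ℝ := ∑ i, ∑ j, A i j * bsgn (σ i) * bsgn (τ j)

lemma linfty_set_eq {n : ℕ} (A : Matrix (Fin n) (Fin n) ℝ) :
    {x : ℝ | ∃ s t : Fin n → ℝ, (∀ i, s i = 1 ∨ s i = -1) ∧
      (∀ j, t j = 1 ∨ t j = -1) ∧ x = ∑ i, ∑ j, A i j * s i * t j}
    = ↑((Finset.univ : Finset ((Fin n → Bool) × (Fin n → Bool))).image
        (fun στ => signSum A στ.1 στ.2)) := by
  classical
  ext x
  simp only [Set.mem_setOf_eq, Finset.coe_image, Finset.coe_univ, Set.image_univ,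
    Set.mem_range]
  constructor
  · rintro ⟨s, t, hs, ht, rfl⟩
    refine ⟨(fun i => decide (s i = 1), fun j => decide (t j = 1)), ?_⟩
    unfold signSum
    refine (Finset.sum_congr rfl fun i _ => Finset.sum_congr rfl fun j _ => ?_).symm
    have h1 : bsgn (decide (s i = 1)) = s i := by
      rcases hs i with h | h <;> norm_num [bsgn, h]
    have h2 : bsgn (decide (t j = 1)) = t j := by
      rcases ht j with h | h <;> norm_num [bsgn, h]
    rw [h1, h2]
  · rintro ⟨⟨σ, τ⟩, rfl⟩
    exact ⟨fun i => bsgn (σ i), fun j => bsgn (τ j),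
      fun i => bsgn_cases _, fun j => bsgn_cases _, rfl⟩

lemma signSum_le_linfty {n : ℕ} (A : Matrix (Fin n) (Fin n) ℝ) (σ τ : Fin n → Bool) :
    signSum A σ τ ≤ linftyToL1Norm A := by
  rw [linftyToL1Norm, linfty_set_eq]
  exact le_csSup (Finset.bddAbove _)
    (by simp only [Finset.coe_image, Finset.coe_univ, Set.image_univ, Set.mem_range];
        exact ⟨(σ, τ), rfl⟩)

lemma linfty_attained {n : ℕ} (A : Matrix (Fin n) (Fin n) ℝ) :
    ∃ σ τ : Fin n → Bool, linftyToL1Norm A = signSum A σ τ := by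
  classical
  rw [linftyToL1Norm, linfty_set_eq]
  have hne : ((Finset.univ : Finset ((Fin n → Bool) × (Fin n → Bool))).image
      (fun στ => signSum A στ.1 στ.2)).Nonempty :=
    Finset.Nonempty.image ⟨(fun _ => true, fun _ => true), Finset.mem_univ _⟩ _
  have := hne.csSup_mem
  rw [Finset.mem_image] at this
  obtain ⟨⟨σ, τ⟩, -, h⟩ := this
  exact ⟨σ, τ, h.symm⟩

lemma signSum_neg_left {n : ℕ} (A : Matrix (Fin n) (Fin n) ℝ) (σ τ : Fin n → Bool) :
    signSum A (fun i => !σ i) τ = -signSum A σ τ := by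
  unfold signSum
  rw [← Finset.sum_neg_distrib]
  refine Finset.sum_congr rfl fun i _ => ?_
  rw [← Finset.sum_neg_distrib]
  refine Finset.sum_congr rfl fun j _ => ?_
  rw [bsgn_not]; ring

lemma linfty_nonneg {n : ℕ} (A : Matrix (Fin n) (Fin n) ℝ) : 0 ≤ linftyToL1Norm A := by
  have h1 := signSum_le_linfty A (fun _ => true) (fun _ => true)
  have h2 := signSum_le_linfty A (fun i => !(fun _ : Fin n => true) i) (fun _ => true)
  rw [signSum_neg_left] at h2
  linarith





lemma sum_split_offdiag {n : ℕ} (g : Fin n → Fin n → ℝ) :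
    ∑ i, ∑ j, g i j
      = (∑ q : {q : Fin n × Fin n // q.1 ≠ q.2}, g q.1.1 q.1.2) + ∑ i, g i i := by
  classical
  rw [← Finset.sum_product' (f := fun i j => g i j), Finset.univ_product_univ]
  rw [← Finset.sum_filter_add_sum_filter_not Finset.univ
    (fun q : Fin n × Fin n => q.1 ≠ q.2) (fun q => g q.1 q.2)]
  congr 1
  · rw [Finset.sum_subtype (p := fun q : Fin n × Fin n => q.1 ≠ q.2)
      (Finset.univ.filter (fun q : Fin n × Fin n => q.1 ≠ q.2))
      (by simp) (fun q => g q.1 q.2)]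
  · refine Finset.sum_nbij' (fun q => q.1) (fun i => (i, i)) ?_ ?_ ?_ ?_ ?_ <;> simp +contextual

lemma decomp {n : ℕ} {p : ℝ} (hp : p ≠ 0) (x : Fin n → Fin n → ℝ)
    (hd : ∀ i, x i i = 0) (σ τ : Fin n → Bool) :
    signSum (Matrix.of fun i j => x i j / p - 1) σ τ
      = (1 / p) * (∑ q : {q : Fin n × Fin n // q.1 ≠ q.2},
          (bsgn (σ q.1.1) * bsgn (τ q.1.2)) * (x q.1.1 q.1.2 - p))
        - ∑ i, bsgn (σ i) * bsgn (τ i) := by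
  have h1 : signSum (Matrix.of fun i j => x i j / p - 1) σ τ
      = ∑ i, ∑ j, (1 / p) * ((bsgn (σ i) * bsgn (τ j)) * (x i j - p)) := by
    refine Finset.sum_congr rfl fun i _ => Finset.sum_congr rfl fun j _ => ?_
    simp only [Matrix.of_apply]
    field_simp
  rw [h1]; simp_rw [← Finset.mul_sum]
  have h2 : ∀ i j : Fin n, (bsgn (σ i) * bsgn (τ j)) * (x i j - p)
      = (fun i j => (bsgn (σ i) * bsgn (τ j)) * (x i j - p)) i j := fun _ _ => rfl
  rw [show (∑ i, ∑ j, (bsgn (σ i) * bsgn (τ j)) * (x i j - p))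
      = (∑ q : {q : Fin n × Fin n // q.1 ≠ q.2},
          (bsgn (σ q.1.1) * bsgn (τ q.1.2)) * (x q.1.1 q.1.2 - p))
        + ∑ i, (bsgn (σ i) * bsgn (τ i)) * (x i i - p) from
    sum_split_offdiag _]
  have h3 : ∑ i, (bsgn (σ i) * bsgn (τ i)) * (x i i - p)
      = -p * ∑ i, bsgn (σ i) * bsgn (τ i) := by
    rw [Finset.mul_sum]
    exact Finset.sum_congr rfl fun i _ => by rw [hd i]; ring
  rw [h3]
  field_simp
  ring

lemma exp_le_one_add_sq {u : ℝ} (hu : |u| ≤ 1) : exp u ≤ 1 + u + u ^ 2 := by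
  have h := Real.exp_bound hu (n := 2) (by norm_num)
  have hsum : ∑ m ∈ Finset.range 2, u ^ m / m.factorial = 1 + u := by
    simp [Finset.sum_range_succ]
  rw [hsum] at h
  have h2 : exp u - (1 + u) ≤ |u| ^ 2 * (3 / (2 * 2)) := by
    calc exp u - (1 + u) ≤ |exp u - (1 + u)| := le_abs_self _
    _ ≤ |u| ^ 2 * ((2 : ℕ).succ / ((2 : ℕ).factorial * 2)) := h
    _ = |u| ^ 2 * (3 / (2 * 2)) := by norm_num [Nat.factorial]
  nlinarith [sq_abs u, sq_nonneg u]

lemma bernoulli_mgf_bound {pp u : ℝ} (h0 : 0 ≤ pp) (h1 : pp ≤ 1) (hu : |u| ≤ 1) :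
    pp * exp (u * (1 - pp)) + (1 - pp) * exp (-(u * pp)) ≤ exp (pp * u ^ 2) := by
  have key : pp * exp (u * (1 - pp)) + (1 - pp) * exp (-(u * pp))
      = exp (-(u * pp)) * (1 + pp * (exp u - 1)) := by
    have : u * (1 - pp) = u + -(u * pp) := by ring
    rw [this, exp_add]
    ring
  rw [key]
  have step1 : 1 + pp * (exp u - 1) ≤ exp (pp * (exp u - 1)) := by
    have := Real.add_one_le_exp (pp * (exp u - 1))
    linarith
  calc exp (-(u * pp)) * (1 + pp * (exp u - 1))
      ≤ exp (-(u * pp)) * exp (pp * (exp u - 1)) := by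
        exact mul_le_mul_of_nonneg_left step1 (exp_nonneg _)
    _ = exp (pp * (exp u - 1 - u)) := by rw [← exp_add]; ring_nf
    _ ≤ exp (pp * u ^ 2) := by
        apply exp_le_exp.mpr
        have := exp_le_one_add_sq hu
        nlinarith

/-- integral of g ∘ X for a Bernoulli(pp) variable X. -/
lemma integral_two_valued {Ω : Type*} [MeasurableSpace Ω] (μ : Measure Ω)
    [IsProbabilityMeasure μ] {X : Ω → ℝ} (hX : Measurable X)
    (hval : ∀ ω, X ω = 0 ∨ X ω = 1) {pp : ℝ} (h0 : 0 ≤ pp) (h1 : pp ≤ 1)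
    (hX1 : μ {ω | X ω = 1} = ENNReal.ofReal pp) (g : ℝ → ℝ) :
    ∫ ω, g (X ω) ∂μ = pp * g 1 + (1 - pp) * g 0 := by
  set A : Set Ω := {ω | X ω = 1} with hA
  have hAmeas : MeasurableSet A := hX (measurableSet_singleton 1)
  have hfun : (fun ω => g (X ω))
      = fun ω => A.indicator (fun _ => g 1 - g 0) ω + g 0 := by
    funext ω
    by_cases hω : X ω = 1
    · rw [Set.indicator_of_mem (by exact hω)]
      rw [hω]; ring
    · have hz : X ω = 0 := (hval ω).resolve_right hω
      rw [Set.indicator_of_notMem (by exact hω)]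
      rw [hz]; ring
  rw [hfun, integral_add ((integrable_const (g 1 - g 0)).indicator hAmeas)
    (integrable_const (g 0)), integral_indicator_const _ hAmeas, integral_const]
  simp only [measureReal_def, measure_univ, ENNReal.toReal_one, one_smul, smul_eq_mul, hX1,
    ENNReal.toReal_ofReal h0]
  ring

lemma chernoff_signSum {Ω : Type*} [MeasurableSpace Ω] (P : Measure Ω)
    [IsProbabilityMeasure P] {n : ℕ} {pn : ℝ} (hp0 : 0 < pn) (hp1 : pn ≤ 1)
    (ξ : Fin n → Fin n → Ω → ℝ) (hmeas : ∀ i j, Measurable (ξ i j))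
    (hval : ∀ (i j : Fin n), i ≠ j → ∀ ω, ξ i j ω = 0 ∨ ξ i j ω = 1)
    (hber : ∀ (i j : Fin n), i ≠ j → P {ω | ξ i j ω = 1} = ENNReal.ofReal pn)
    (hindep : iIndepFun
      (m := fun _ : {q : Fin n × Fin n // q.1 ≠ q.2} => (inferInstance : MeasurableSpace ℝ))
      (fun q ω => ξ q.1.1 q.1.2 ω) P)
    (c : {q : Fin n × Fin n // q.1 ≠ q.2} → ℝ) (hc : ∀ q, c q = 1 ∨ c q = -1)
    {l b : ℝ} (hl0 : 0 ≤ l) (hl1 : l ≤ 1) :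
    P {ω | b ≤ ∑ q : {q : Fin n × Fin n // q.1 ≠ q.2}, c q * (ξ q.1.1 q.1.2 ω - pn)}
      ≤ ENNReal.ofReal (exp (-l * b + (n : ℝ) ^ 2 * pn * l ^ 2)) := by
  set X : {q : Fin n × Fin n // q.1 ≠ q.2} → Ω → ℝ := fun q ω => c q * (ξ q.1.1 q.1.2 ω - pn) with hX
  have habs : ∀ q, |c q| = 1 := fun q => by rcases hc q with h | h <;> simp [h]
  have hXmeas : ∀ q, Measurable (X q) := fun q =>
    ((hmeas _ _).sub measurable_const).const_mul _
  have hindep' : iIndepFun (m := fun _ : {q : Fin n × Fin n // q.1 ≠ q.2} => (inferInstance : MeasurableSpace ℝ)) X P := by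
    have := hindep.comp (fun q (y : ℝ) => c q * (y - pn))
      (fun q => (measurable_id.sub measurable_const).const_mul _)
    exact this
  have hXbdd : ∀ q ω, |X q ω| ≤ 1 := by
    intro q ω
    rw [hX, abs_mul, habs, one_mul, abs_sub_comm]
    rcases hval q.1.1 q.1.2 q.2 ω with h | h <;> rw [h] <;> rw [abs_le] <;>
      constructor <;> linarith
  have hint : ∀ q, Integrable (fun ω => exp (l * X q ω)) P := by
    intro q
    refine (integrable_const (exp 1)).mono'
      (((hXmeas q).const_mul l).exp.aestronglyMeasurable) (ae_of_all _ fun ω => ?_)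
    rw [Real.norm_eq_abs, abs_exp]
    apply exp_le_exp.mpr
    calc l * X q ω ≤ |l * X q ω| := le_abs_self _
      _ = |l| * |X q ω| := abs_mul _ _
      _ ≤ 1 * 1 := by
          apply mul_le_mul (by rwa [abs_of_nonneg hl0]) (hXbdd q ω) (abs_nonneg _) one_pos.le
      _ = 1 := one_mul 1
  have hmgf_le : ∀ q, mgf (X q) P l ≤ exp (pn * l ^ 2) := by
    intro q
    have hcalc : mgf (X q) P l
        = pn * exp ((l * c q) * (1 - pn)) + (1 - pn) * exp (-((l * c q) * pn)) := by
      rw [mgf]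
      have := integral_two_valued P (hmeas q.1.1 q.1.2) (hval q.1.1 q.1.2 q.2)
        hp0.le hp1 (hber q.1.1 q.1.2 q.2) (fun y => exp (l * (c q * (y - pn))))
      rw [show (fun ω => exp (l * X q ω)) = fun ω => exp (l * (c q * (ξ q.1.1 q.1.2 ω - pn)))
        from rfl, this]
      ring_nf
    rw [hcalc]
    have hu : |l * c q| ≤ 1 := by
      rw [abs_mul, habs, mul_one, abs_of_nonneg hl0]; exact hl1
    calc pn * exp ((l * c q) * (1 - pn)) + (1 - pn) * exp (-((l * c q) * pn))
        ≤ exp (pn * (l * c q) ^ 2) := bernoulli_mgf_bound hp0.le hp1 hu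
      _ = exp (pn * l ^ 2) := by
          rcases hc q with h | h <;> rw [show (l * c q) ^ 2 = l ^ 2 * (c q)^2 by ring, h] <;>
            norm_num
  have hcard : (Fintype.card {q : Fin n × Fin n // q.1 ≠ q.2} : ℝ) ≤ (n : ℝ) ^ 2 := by
    have := Fintype.card_subtype_le (fun q : Fin n × Fin n => q.1 ≠ q.2)
    have h2 : Fintype.card (Fin n × Fin n) = n * n := by simp
    rw [h2] at this
    calc (Fintype.card {q : Fin n × Fin n // q.1 ≠ q.2} : ℝ) ≤ ((n * n : ℕ) : ℝ) := by exact_mod_cast this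
      _ = (n : ℝ) ^ 2 := by push_cast; ring
  have hsum_int : Integrable (fun ω => exp (l * (∑ q : {q : Fin n × Fin n // q.1 ≠ q.2}, X q) ω)) P :=
    hindep'.integrable_exp_mul_sum hXmeas (fun q _ => hint q)
  have hchern := measure_ge_le_exp_mul_mgf (μ := P) (X := ∑ q : {q : Fin n × Fin n // q.1 ≠ q.2}, X q) b hl0 hsum_int
  have hmgfsum : mgf (∑ q : {q : Fin n × Fin n // q.1 ≠ q.2}, X q) P l ≤ exp ((n : ℝ) ^ 2 * pn * l ^ 2) := by
    rw [hindep'.mgf_sum hXmeas]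
    calc ∏ q : {q : Fin n × Fin n // q.1 ≠ q.2}, mgf (X q) P l ≤ ∏ _q : {q : Fin n × Fin n // q.1 ≠ q.2}, exp (pn * l ^ 2) :=
          Finset.prod_le_prod (fun q _ => mgf_nonneg) (fun q _ => hmgf_le q)
      _ = exp (pn * l ^ 2) ^ Fintype.card {q : Fin n × Fin n // q.1 ≠ q.2} := by
          rw [Finset.prod_const, Finset.card_univ]
      _ = exp ((Fintype.card {q : Fin n × Fin n // q.1 ≠ q.2} : ℝ) * (pn * l ^ 2)) := by
          rw [← Real.exp_nat_mul]
      _ ≤ exp ((n : ℝ) ^ 2 * pn * l ^ 2) := by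
          apply exp_le_exp.mpr
          have hnn : 0 ≤ pn * l ^ 2 := mul_nonneg hp0.le (sq_nonneg _)
          nlinarith
  have hfinal : (P {ω | b ≤ (∑ q : {q : Fin n × Fin n // q.1 ≠ q.2}, X q) ω}).toReal
      ≤ exp (-l * b + (n : ℝ) ^ 2 * pn * l ^ 2) := by
    calc (P {ω | b ≤ (∑ q : {q : Fin n × Fin n // q.1 ≠ q.2}, X q) ω}).toReal
        ≤ exp (-l * b) * mgf (∑ q : {q : Fin n × Fin n // q.1 ≠ q.2}, X q) P l := hchern
      _ ≤ exp (-l * b) * exp ((n : ℝ) ^ 2 * pn * l ^ 2) :=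
          mul_le_mul_of_nonneg_left hmgfsum (exp_nonneg _)
      _ = exp (-l * b + (n : ℝ) ^ 2 * pn * l ^ 2) := by rw [← exp_add]
  have hset : {ω | b ≤ ∑ q : {q : Fin n × Fin n // q.1 ≠ q.2}, c q * (ξ q.1.1 q.1.2 ω - pn)}
      = {ω | b ≤ (∑ q : {q : Fin n × Fin n // q.1 ≠ q.2}, X q) ω} := by
    ext ω; simp [Finset.sum_apply, hX]
  rw [hset]
  rw [ENNReal.le_ofReal_iff_toReal_le (measure_ne_top _ _) (exp_nonneg _)]
  exact hfinal

section Pieces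
variable {Ω : Type*} [MeasurableSpace Ω]

lemma bsgn_abs (b : Bool) : |bsgn b| = 1 := by cases b <;> norm_num [bsgn]

lemma union_bound (P : Measure Ω) [IsProbabilityMeasure P]
    {n : ℕ} {pn : ℝ} (hp0 : 0 < pn) (hp1 : pn ≤ 1)
    (ξ : Fin n → Fin n → Ω → ℝ) (hmeas : ∀ i j, Measurable (ξ i j))
    (hval : ∀ (i j : Fin n), i ≠ j → ∀ ω, ξ i j ω = 0 ∨ ξ i j ω = 1)
    (hdiag : ∀ (i : Fin n) (ω : Ω), ξ i i ω = 0)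
    (hber : ∀ (i j : Fin n), i ≠ j → P {ω | ξ i j ω = 1} = ENNReal.ofReal pn)
    (hindep : iIndepFun
      (m := fun _ : {q : Fin n × Fin n // q.1 ≠ q.2} => (inferInstance : MeasurableSpace ℝ))
      (fun q ω => ξ q.1.1 q.1.2 ω) P)
    {thr l : ℝ} (hl0 : 0 ≤ l) (hl1 : l ≤ 1) :
    P {ω | thr ≤ linftyToL1Norm (Matrix.of fun i j => ξ i j ω / pn - 1)}
      ≤ ENNReal.ofReal ((4 : ℝ) ^ n
          * exp (-l * (pn * (thr - n)) + (n : ℝ) ^ 2 * pn * l ^ 2)) := by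
  classical
  set b : ℝ := pn * (thr - n) with hb
  set S : ((Fin n → Bool) × (Fin n → Bool)) → Set Ω := fun στ =>
    {ω | b ≤ ∑ q : {q : Fin n × Fin n // q.1 ≠ q.2},
      (bsgn (στ.1 q.1.1) * bsgn (στ.2 q.1.2)) * (ξ q.1.1 q.1.2 ω - pn)} with hS
  have hincl : {ω | thr ≤ linftyToL1Norm (Matrix.of fun i j => ξ i j ω / pn - 1)}
      ⊆ ⋃ στ : ((Fin n → Bool) × (Fin n → Bool)), S στ := by
    intro ω hω
    obtain ⟨σ, τ, hA⟩ := linfty_attained (Matrix.of fun i j => ξ i j ω / pn - 1)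
    rw [decomp hp0.ne' (fun i j => ξ i j ω) (fun i => hdiag i ω) σ τ] at hA
    simp only [Set.mem_setOf_eq] at hω
    rw [hA] at hω
    set T : ℝ := ∑ q : {q : Fin n × Fin n // q.1 ≠ q.2},
      (bsgn (σ q.1.1) * bsgn (τ q.1.2)) * (ξ q.1.1 q.1.2 ω - pn) with hT
    have hD : |∑ i, bsgn (σ i) * bsgn (τ i)| ≤ (n : ℝ) := by
      calc |∑ i, bsgn (σ i) * bsgn (τ i)| ≤ ∑ i, |bsgn (σ i) * bsgn (τ i)| :=
            Finset.abs_sum_le_sum_abs _ _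
        _ = ∑ _i : Fin n, (1 : ℝ) := Finset.sum_congr rfl fun i _ => by
            rw [abs_mul, bsgn_abs, bsgn_abs, mul_one]
        _ = (n : ℝ) := by simp
    have h1 : thr - (n : ℝ) ≤ (1 / pn) * T := by
      have := abs_le.mp hD
      linarith
    have hTb : b ≤ T := by
      calc b = pn * (thr - (n : ℝ)) := hb
        _ ≤ pn * ((1 / pn) * T) := mul_le_mul_of_nonneg_left h1 hp0.le
        _ = T := by field_simp
    exact Set.mem_iUnion.mpr ⟨(σ, τ), hTb⟩
  have hcard : (Fintype.card ((Fin n → Bool) × (Fin n → Bool))) = 4 ^ n := by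
    simp only [Fintype.card_prod, Fintype.card_fun, Fintype.card_bool, Fintype.card_fin]
    rw [← pow_add, ← two_mul, pow_mul]
    norm_num
  calc P {ω | thr ≤ linftyToL1Norm (Matrix.of fun i j => ξ i j ω / pn - 1)}
      ≤ P (⋃ στ : ((Fin n → Bool) × (Fin n → Bool)), S στ) := measure_mono hincl
    _ ≤ ∑ στ : ((Fin n → Bool) × (Fin n → Bool)), P (S στ) :=
        measure_iUnion_fintype_le _ _
    _ ≤ ∑ _στ : ((Fin n → Bool) × (Fin n → Bool)),
        ENNReal.ofReal (exp (-l * b + (n : ℝ) ^ 2 * pn * l ^ 2)) := by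
        refine Finset.sum_le_sum fun στ _ => ?_
        refine chernoff_signSum P hp0 hp1 ξ hmeas hval hber hindep
          (fun q => bsgn (στ.1 q.1.1) * bsgn (στ.2 q.1.2)) (fun q => ?_) hl0 hl1
        rcases bsgn_cases (στ.1 q.1.1) with h1 | h1 <;>
          rcases bsgn_cases (στ.2 q.1.2) with h2 | h2 <;> simp [h1, h2]
    _ = (Fintype.card ((Fin n → Bool) × (Fin n → Bool)) : ENNReal)
        * ENNReal.ofReal (exp (-l * b + (n : ℝ) ^ 2 * pn * l ^ 2)) := by
        rw [Finset.sum_const, Finset.card_univ, nsmul_eq_mul]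
    _ = ENNReal.ofReal ((4 : ℝ) ^ n
        * exp (-l * (pn * (thr - n)) + (n : ℝ) ^ 2 * pn * l ^ 2)) := by
        rw [ENNReal.ofReal_mul (by positivity), hcard]
        congr 1
        rw [← ENNReal.ofReal_natCast]
        congr 1
        push_cast
        ring

end Pieces

lemma four_pow_mul_exp_le {p : ℕ → ℝ} (hp : ∀ n, 0 < p n ∧ p n ≤ 1)
    (hnp : Tendsto (fun n : ℕ => (n : ℝ) * p n) atTop atTop) (k : ℕ) :
    ∀ᶠ n : ℕ in atTop, (4 : ℝ) ^ n *
      exp (-(1 / (2 * ((k : ℝ) + 1))) *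
          (p n * ((1 / ((k : ℝ) + 1)) * (n : ℝ) ^ 2 - n))
        + (n : ℝ) ^ 2 * p n * (1 / (2 * ((k : ℝ) + 1))) ^ 2) ≤ exp (-(n : ℝ)) := by
  have hKpos : (0 : ℝ) < (k : ℝ) + 1 := by positivity
  filter_upwards [hnp.eventually_ge_atTop (96 * ((k : ℝ) + 1) ^ 2),
    tendsto_natCast_atTop_atTop.eventually_ge_atTop (4 * ((k : ℝ) + 1))]
    with n hn1 hn2
  set K : ℝ := (k : ℝ) + 1 with hK
  obtain ⟨hP0, hP1⟩ := hp n
  have hEeq : -(1 / (2 * K)) * (p n * ((1 / K) * (n : ℝ) ^ 2 - n))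
      + (n : ℝ) ^ 2 * p n * (1 / (2 * K)) ^ 2
      = p n * (n : ℝ) * (2 * K - n) / (4 * K ^ 2) := by
    field_simp
    ring
  have hn0 : (0 : ℝ) ≤ (n : ℝ) := Nat.cast_nonneg n
  have hE3 : p n * (n : ℝ) * (2 * K - n) / (4 * K ^ 2) ≤ -3 * n := by
    rw [div_le_iff₀ (by positivity)]
    nlinarith [mul_nonneg hP0.le hn0, mul_le_mul_of_nonneg_left hn1 hn0,
      sq_nonneg ((n : ℝ) - 4 * K), mul_pos hKpos hKpos]
  have hexp4 : (4 : ℝ) ≤ exp 2 := by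
    have h1 : (2 : ℝ) ≤ exp 1 := by
      have := Real.add_one_le_exp (1 : ℝ)
      linarith
    calc (4 : ℝ) = 2 * 2 := by norm_num
      _ ≤ exp 1 * exp 1 := by nlinarith [exp_pos (1 : ℝ)]
      _ = exp 2 := by rw [← exp_add]; norm_num
  calc (4 : ℝ) ^ n * exp (-(1 / (2 * K)) * (p n * ((1 / K) * (n : ℝ) ^ 2 - n))
        + (n : ℝ) ^ 2 * p n * (1 / (2 * K)) ^ 2)
      ≤ exp 2 ^ n * exp (-3 * n) := by
        apply mul_le_mul (pow_le_pow_left₀ (by norm_num) hexp4 n) ?_ (exp_nonneg _)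
          (pow_nonneg (exp_nonneg _) _)
        rw [hEeq]
        exact exp_le_exp.mpr hE3
    _ = exp ((n : ℝ) * 2) * exp (-3 * n) := by rw [Real.exp_nat_mul]
    _ = exp ((n : ℝ) * 2 + -3 * n) := by rw [← exp_add]
    _ = exp (-(n : ℝ)) := by congr 1; ring

end Aux

/-- Almost-sure version of the Erdős–Rényi concentration: if n pₙ → ∞ then almost surely
(1/n²)‖ξ⁽ⁿ⁾/pₙ - 𝟏‖_{∞→1} → 0 as n → ∞. -/
theorem erdos_renyi_as_convergence {Ω : Type*} [MeasurableSpace Ω]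
    (ℙ : Measure Ω) [IsProbabilityMeasure ℙ]
    (p : ℕ → ℝ) (hp : ∀ n, 0 < p n ∧ p n ≤ 1)
    (hnp : Tendsto (fun n : ℕ => (n : ℝ) * p n) atTop atTop)
    (ξ : (n : ℕ) → Fin n → Fin n → Ω → ℝ)
    (hmeas : ∀ n i j, Measurable (ξ n i j))
    (hval : ∀ n (i j : Fin n), i ≠ j → ∀ ω, ξ n i j ω = 0 ∨ ξ n i j ω = 1)
    (hdiag : ∀ n (i : Fin n) (ω : Ω), ξ n i i ω = 0)
    (hber : ∀ n (i j : Fin n), i ≠ j →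
      ℙ {ω | ξ n i j ω = 1} = ENNReal.ofReal (p n))
    (hindep : ∀ n, ProbabilityTheory.iIndepFun
      (m := fun _ : {q : Fin n × Fin n // q.1 ≠ q.2} => (inferInstance : MeasurableSpace ℝ))
      (fun q ω => ξ n q.1.1 q.1.2 ω) ℙ) :
    ∀ᵐ ω ∂ℙ, Tendsto (fun n : ℕ => (1 / (n : ℝ) ^ 2) *
        linftyToL1Norm (Matrix.of fun i j => ξ n i j ω / p n - 1))
      atTop (nhds 0) := by
  have key : ∀ k : ℕ, ∀ᵐ ω ∂ℙ, ∀ᶠ n in atTop,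
      linftyToL1Norm (Matrix.of fun i j => ξ n i j ω / p n - 1)
        < (1 / ((k : ℝ) + 1)) * (n : ℝ) ^ 2 := by
    intro k
    set E : ℕ → Set Ω := fun n => {ω | (1 / ((k : ℝ) + 1)) * (n : ℝ) ^ 2
      ≤ linftyToL1Norm (Matrix.of fun i j => ξ n i j ω / p n - 1)} with hE
    have hl0 : (0 : ℝ) ≤ 1 / (2 * ((k : ℝ) + 1)) := by positivity
    have hl1 : 1 / (2 * ((k : ℝ) + 1)) ≤ 1 := by
      rw [div_le_one (by positivity)]
      have : (0 : ℝ) ≤ (k : ℝ) := Nat.cast_nonneg k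
      linarith
    have hEbound : ∀ n, ℙ (E n) ≤ ENNReal.ofReal ((4 : ℝ) ^ n *
        Real.exp (-(1 / (2 * ((k : ℝ) + 1))) *
            (p n * ((1 / ((k : ℝ) + 1)) * (n : ℝ) ^ 2 - n))
          + (n : ℝ) ^ 2 * p n * (1 / (2 * ((k : ℝ) + 1))) ^ 2)) := fun n =>
      union_bound ℙ (hp n).1 (hp n).2 (ξ n) (hmeas n) (hval n) (hdiag n)
        (hber n) (hindep n) hl0 hl1
    obtain ⟨N, hN⟩ := eventually_atTop.mp (four_pow_mul_exp_le hp hnp k)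
    have hEexp : ∀ n, N ≤ n → ℙ (E n) ≤ ENNReal.ofReal (Real.exp (-(n : ℝ))) :=
      fun n hn => (hEbound n).trans (ENNReal.ofReal_le_ofReal (hN n hn))
    set s : ℕ → Set Ω := fun n => if n < N then ∅ else E n with hs
    have hsb : ∀ n, ℙ (s n) ≤ (ENNReal.ofReal (Real.exp (-1))) ^ n := by
      intro n
      by_cases hn : n < N
      · simp [hs, hn]
      · rw [hs]
        simp only [hn, if_false]
        refine (hEexp n (le_of_not_gt hn)).trans (le_of_eq ?_)
        rw [← ENNReal.ofReal_pow (Real.exp_nonneg _), ← Real.exp_nat_mul]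
        congr 1
        ring
    have hr1 : ENNReal.ofReal (Real.exp (-1)) < 1 := by
      rw [ENNReal.ofReal_lt_one]
      have := Real.exp_lt_exp.mpr (show (-1 : ℝ) < 0 by norm_num)
      rwa [Real.exp_zero] at this
    have hsum : (∑' n, ℙ (s n)) ≠ ⊤ := by
      refine ne_top_of_le_ne_top ?_ (ENNReal.tsum_le_tsum hsb)
      rw [ENNReal.tsum_geometric]
      refine ENNReal.inv_ne_top.mpr ?_
      rw [Ne, tsub_eq_zero_iff_le]
      exact not_le.mpr hr1
    filter_upwards [ae_eventually_notMem hsum] with ω hω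
    filter_upwards [hω, eventually_ge_atTop N] with n h1 h2
    have hsE : s n = E n := by rw [hs]; simp [Nat.not_lt.mpr h2]
    rw [hsE] at h1
    exact not_le.mp h1
  filter_upwards [ae_all_iff.mpr key] with ω hω
  rw [Metric.tendsto_atTop]
  intro ε hε
  obtain ⟨k, hk⟩ := exists_nat_one_div_lt hε
  obtain ⟨N1, hN1⟩ := eventually_atTop.mp (hω k)
  refine ⟨max N1 1, fun n hn => ?_⟩
  have hn1 : N1 ≤ n := le_trans (le_max_left _ _) hn
  have hn2 : 1 ≤ n := le_trans (le_max_right _ _) hn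
  have hL := hN1 n hn1
  have hL0 := linfty_nonneg (Matrix.of fun i j => ξ n i j ω / p n - 1)
  have hnsq : (0 : ℝ) < (n : ℝ) ^ 2 := by
    have : (1 : ℝ) ≤ (n : ℝ) := by exact_mod_cast hn2
    positivity
  rw [Real.dist_eq, sub_zero, abs_of_nonneg (by positivity)]
  calc (1 / (n : ℝ) ^ 2) * linftyToL1Norm (Matrix.of fun i j => ξ n i j ω / p n - 1)
      < (1 / (n : ℝ) ^ 2) * ((1 / ((k : ℝ) + 1)) * (n : ℝ) ^ 2) := by
        exact mul_lt_mul_of_pos_left hL (by positivity)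
    _ = 1 / ((k : ℝ) + 1) := by field_simp
    _ < ε := hk
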